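/- Let n ≥ 2d. In the circular complete graph K_{n/d}, the neighborhood complex N(K_{n/d}) is isomorphic as a simplicial complex to N(n, n-2d). -/

import Mathlib

/-- The discrete circular arc `[i, i+k]ₙ ⊆ ℤ/n`. -/
def cyclicArc (n k : ℕ) (i : ZMod n) : Finset (ZMod n) :=
  (Finset.range (k + 1)).image (fun j : ℕ => i + (j : ZMod n))

/-- `σ` is a face of the nerve complex `N(n,k)`: it is contained in some cyclic
interval `[i, i+k]ₙ`. -/
def IsFaceN (n k : ℕ) (σ : Finset (ZMod n)) : Prop :=
  ∃ i : ZMod n, σ ⊆ cyclicArc n k i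


/-- The circular complete graph `K_{n/d}`: vertices `ℤ/n`, with `i ~ j` iff the cyclic
distance `|i-j|` satisfies `d ≤ |i-j| ≤ n-d` (stated symmetrically via both `(i-j).val`
and `(j-i).val`, which is equivalent). -/
def circGraph (n d : ℕ) : SimpleGraph (ZMod n) where
  Adj i j := i ≠ j ∧ (d ≤ (i - j).val ∧ (i - j).val ≤ n - d)
    ∧ (d ≤ (j - i).val ∧ (j - i).val ≤ n - d)
  symm := by
    constructor
    intro i j h
    exact ⟨h.1.symm, h.2.2, h.2.1⟩
  loopless := by
    constructor
    intro i h
    exact h.1 rfl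


/-- for `n ≥ 2d` (with `d ≥ 1`), the neighborhood complex of the circular
complete graph `K_{n/d}` (faces: vertex sets with a common neighbor) is isomorphic,
as a simplicial complex, to `N(n, n-2d)`. -/
theorem neighborhoodComplex_iso_nerve (n d : ℕ) [NeZero n] (hd : 1 ≤ d) (hn : 2 * d ≤ n) :
    ∃ e : ZMod n ≃ ZMod n, ∀ σ : Finset (ZMod n),
      (∃ w : ZMod n, ∀ v ∈ σ, (circGraph n d).Adj w v) ↔
        IsFaceN n (n - 2 * d) (σ.image e) := by
  have hn0 : 0 < n := Nat.pos_of_ne_zero (NeZero.ne n)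
  refine ⟨Equiv.refl _, fun σ => ?_⟩
  have hσ : σ.image (Equiv.refl (ZMod n)) = σ := by simp
  rw [hσ]
  constructor
  · rintro ⟨w, hw⟩
    refine ⟨w + (d : ZMod n), fun v hv => ?_⟩
    obtain ⟨hne, ⟨h1, h2⟩, h3, h4⟩ := hw v hv
    refine Finset.mem_image.2 ⟨(v - w).val - d, Finset.mem_range.2 (by omega), ?_⟩
    have hc : ((d : ℕ) : ZMod n) + (((v - w).val - d : ℕ) : ZMod n)
        = (((v - w).val : ℕ) : ZMod n) := by
      rw [← Nat.cast_add]
      congr 1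
      omega
    have hval : (((v - w).val : ℕ) : ZMod n) = v - w := by
      simp [ZMod.natCast_val, ZMod.cast_id]
    rw [add_assoc, hc, hval]
    ring
  · rintro ⟨i, hi⟩
    refine ⟨i - (d : ZMod n), fun v hv => ?_⟩
    obtain ⟨j, hj, hjv⟩ := Finset.mem_image.1 (hi hv)
    rw [Finset.mem_range] at hj
    have hjn : j ≤ n - 2 * d := by omega
    have hvw : v - (i - (d : ZMod n)) = ((j + d : ℕ) : ZMod n) := by
      rw [← hjv]; push_cast; ring
    have hlt : j + d < n := by omega
    have hval : (v - (i - (d : ZMod n))).val = j + d := by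
      rw [hvw, ZMod.val_cast_of_lt hlt]
    have hne0 : v - (i - (d : ZMod n)) ≠ 0 := by
      intro h
      rw [h, ZMod.val_zero] at hval
      omega
    have hnegval : ((i - (d : ZMod n)) - v).val = n - (j + d) := by
      have : (i - (d : ZMod n)) - v = -(v - (i - (d : ZMod n))) := by ring
      rw [this, ZMod.neg_val, if_neg hne0, hval]
    refine ⟨?_, ⟨?_, ?_⟩, ?_, ?_⟩
    · intro h
      apply hne0
      rw [← h]; ring
    · rw [hnegval]; omega
    · rw [hnegval]; omega
    · rw [hval]; omega
    · rw [hval]; omega
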